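/- Deterministic weight-perturbation inequality (core algebraic claim in the proof of Theorem 3). Let S be a nonempty finite set, w, ŵ: S → [0,∞) with Σ_{s∈S} w(s) > 0 and Σ_{s∈S} ŵ(s) > 0, V: S → ℝ, and v̂ ∈ ℝ. Define t̂ := [Σ_{s∈S} ŵ(s) 1{V(s) ≥ v̂}] / Σ_{s∈S} ŵ(s), δ⁺(s) := max(ŵ(s) − w(s), 0), and δ⁻(s) := max(w(s) − ŵ(s), 0). Then [Σ_{s∈S} w(s) 1{V(s) ≥ v̂}] / Σ_{s∈S} w(s) − t̂ ≤ [ (1 − t̂) · Σ_{s∈S} δ⁻(s) 1{V(s) ≥ v̂} + t̂ · Σ_{s∈S} δ⁺(s) 1{V(s) < v̂} ] / Σ_{s∈S} w(s). -/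

import Mathlib

open scoped Classical

/-- **Deterministic weight-perturbation inequality** (core algebraic claim in the
proof of Theorem 3).  For a nonempty finite set `S`, nonnegative weights `w, ŵ`
with positive total mass, scores `V : S → ℝ` and a threshold `v̂ ∈ ℝ`, setting
`t̂ := (∑ ŵ s · 1{V s ≥ v̂}) / ∑ ŵ s`, `δ⁺ s := max (ŵ s - w s) 0` and
`δ⁻ s := max (w s - ŵ s) 0`, the difference between the `w`-weighted and the
`ŵ`-weighted fractions of mass at or above `v̂` is bounded by
`((1 - t̂) · ∑ δ⁻ s · 1{V s ≥ v̂} + t̂ · ∑ δ⁺ s · 1{V s < v̂}) / ∑ w s`. -/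
theorem weight_perturbation_inequality
    {S : Type*} [Fintype S] [Nonempty S]
    (w what : S → ℝ) (hw : ∀ s, 0 ≤ w s) (hwhat : ∀ s, 0 ≤ what s)
    (hwpos : 0 < ∑ s, w s) (hwhatpos : 0 < ∑ s, what s)
    (V : S → ℝ) (vhat : ℝ) :
    (∑ s, w s * (if vhat ≤ V s then 1 else 0)) / (∑ s, w s)
        - (∑ s, what s * (if vhat ≤ V s then 1 else 0)) / (∑ s, what s)
      ≤ ((1 - (∑ s, what s * (if vhat ≤ V s then 1 else 0)) / (∑ s, what s))
            * (∑ s, max (w s - what s) 0 * (if vhat ≤ V s then 1 else 0))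
          + ((∑ s, what s * (if vhat ≤ V s then 1 else 0)) / (∑ s, what s))
            * (∑ s, max (what s - w s) 0 * (if V s < vhat then 1 else 0)))
        / (∑ s, w s) := by
  set t : ℝ := (∑ s, what s * (if vhat ≤ V s then 1 else 0)) / (∑ s, what s) with ht
  have hWh : (∑ s, what s) ≠ 0 := ne_of_gt hwhatpos
  have hW : (∑ s, w s) ≠ 0 := ne_of_gt hwpos
  have ht0 : 0 ≤ t := by
    apply div_nonneg _ (le_of_lt hwhatpos)
    apply Finset.sum_nonneg
    intro s _
    have := hwhat s
    split <;> simp [this]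
  have ht1 : t ≤ 1 := by
    rw [ht, div_le_one hwhatpos]
    apply Finset.sum_le_sum
    intro s _
    split <;> simp [hwhat s]
  have htWh : t * (∑ s, what s) = ∑ s, what s * (if vhat ≤ V s then 1 else 0) := by
    rw [ht, div_mul_cancel₀ _ hWh]
  -- reduce to a numerator inequality
  have hrw : (∑ s, w s * (if vhat ≤ V s then 1 else 0)) / (∑ s, w s) - t
      = ((∑ s, w s * (if vhat ≤ V s then 1 else 0)) - t * (∑ s, w s)) / (∑ s, w s) := by
    field_simp
  rw [hrw, div_le_div_iff_of_pos_right hwpos]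
  -- pointwise bound
  have key : ∀ s : S, (w s - what s) * ((if vhat ≤ V s then 1 else 0) - t)
      ≤ (1 - t) * (max (w s - what s) 0 * (if vhat ≤ V s then 1 else 0))
        + t * (max (what s - w s) 0 * (if V s < vhat then 1 else 0)) := by
    intro s
    rcases le_or_gt vhat (V s) with h | h
    · rw [if_pos h, if_neg (not_lt.mpr h)]
      have h1 : w s - what s ≤ max (w s - what s) 0 := le_max_left _ _
      nlinarith
    · rw [if_neg (not_le.mpr h), if_pos h]
      have h1 : what s - w s ≤ max (what s - w s) 0 := le_max_left _ _
      nlinarith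
  calc (∑ s, w s * (if vhat ≤ V s then 1 else 0)) - t * (∑ s, w s)
      = ∑ s, (w s - what s) * ((if vhat ≤ V s then 1 else 0) - t) := by
        have h : ∀ s : S, (w s - what s) * ((if vhat ≤ V s then 1 else 0) - t)
            = (w s * (if vhat ≤ V s then 1 else 0) - what s * (if vhat ≤ V s then 1 else 0))
              - (t * w s - t * what s) := fun s => by ring
        rw [Finset.sum_congr rfl fun s _ => h s, Finset.sum_sub_distrib,
          Finset.sum_sub_distrib, Finset.sum_sub_distrib, ← Finset.mul_sum, ← Finset.mul_sum,
          htWh]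
        ring
    _ ≤ ∑ s, ((1 - t) * (max (w s - what s) 0 * (if vhat ≤ V s then 1 else 0))
          + t * (max (what s - w s) 0 * (if V s < vhat then 1 else 0))) := by
        exact Finset.sum_le_sum (fun s _ => key s)
    _ = (1 - t) * (∑ s, max (w s - what s) 0 * (if vhat ≤ V s then 1 else 0))
          + t * (∑ s, max (what s - w s) 0 * (if V s < vhat then 1 else 0)) := by
        rw [Finset.sum_add_distrib, ← Finset.mul_sum, ← Finset.mul_sum]
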